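/- Let G be a group, let μ ∈ G be an element whose normal closure is all of G, and let λ be an element of the second derived subgroup of G. Let D∞ ⊆ ℍ be the binary dihedral group, consisting of all quaternions of the form a + bi with a² + b² = 1 together with all quaternions of the form cj + dk with c² + d² = 1. If ρ : G → ℍˣ is a group homomorphism whose image is contained in D∞ and is nonabelian, then ρ(μ)⁴ = 1 and ρ(λ) = 1; in particular ρ(μ⁴λ) = 1. -/

import Mathlib

/-- A quaternion lies in the binary dihedral group `D∞` if it is either of the form
`a + b·i` with `a² + b² = 1` or of the form `c·j + d·k` with `c² + d² = 1`. -/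
def IsBinaryDihedral (q : Quaternion ℝ) : Prop :=
  (q.imJ = 0 ∧ q.imK = 0 ∧ q.re ^ 2 + q.imI ^ 2 = 1) ∨
  (q.re = 0 ∧ q.imI = 0 ∧ q.imJ ^ 2 + q.imK ^ 2 = 1)

namespace BDaux

/-- circle shape -/
def C (q : Quaternion ℝ) : Prop := q.imJ = 0 ∧ q.imK = 0
/-- j-type shape -/
def Jt (q : Quaternion ℝ) : Prop := q.re = 0 ∧ q.imI = 0

lemma mulCC {p q : Quaternion ℝ} (hp : C p) (hq : C q) : C (p * q) := by
  obtain ⟨h1, h2⟩ := hp; obtain ⟨h3, h4⟩ := hq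
  constructor <;> simp [h1, h2, h3, h4]

lemma mulCJ {p q : Quaternion ℝ} (hp : C p) (hq : Jt q) : Jt (p * q) := by
  obtain ⟨h1, h2⟩ := hp; obtain ⟨h3, h4⟩ := hq
  constructor <;> simp [h1, h2, h3, h4]

lemma mulJC {p q : Quaternion ℝ} (hp : Jt p) (hq : C q) : Jt (p * q) := by
  obtain ⟨h1, h2⟩ := hp; obtain ⟨h3, h4⟩ := hq
  constructor <;> simp [h1, h2, h3, h4]

lemma mulJJ {p q : Quaternion ℝ} (hp : Jt p) (hq : Jt q) : C (p * q) := by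
  obtain ⟨h1, h2⟩ := hp; obtain ⟨h3, h4⟩ := hq
  constructor <;> simp [h1, h2, h3, h4]

lemma not_C_and_Jt {q : Quaternion ℝ} (h : q ≠ 0) : ¬ (C q ∧ Jt q) := by
  rintro ⟨⟨h1, h2⟩, h3, h4⟩
  exact h (by ext <;> assumption)

lemma commCC {u v : (Quaternion ℝ)ˣ} (hu : C u.val) (hv : C v.val) : u * v = v * u := by
  obtain ⟨h1, h2⟩ := hu; obtain ⟨h3, h4⟩ := hv
  have hv' : u.val * v.val = v.val * u.val := by
    ext <;> simp [h1, h2, h3, h4] <;> ring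
  exact Units.ext (by simpa [Units.val_mul] using hv')

end BDaux

open BDaux Quaternion commutatorElement in
/-- If `μ ∈ G` normally generates `G`, `λ` lies in the second derived
subgroup of `G`, and `ρ : G →* ℍˣ` is a homomorphism with nonabelian image contained in the
binary dihedral group `D∞`, then `ρ(μ)⁴ = 1` and `ρ(λ) = 1`; in particular `ρ(μ⁴λ) = 1`. -/
theorem binary_dihedral_rep_kills_four_surgery_relator
    (G : Type*) [Group G] (μ lam : G)
    (hμ : Subgroup.normalClosure ({μ} : Set G) = ⊤)
    (hlam : lam ∈ derivedSeries G 2)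
    (ρ : G →* (Quaternion ℝ)ˣ)
    (hD : ∀ g : G, IsBinaryDihedral ((ρ g : (Quaternion ℝ)ˣ) : Quaternion ℝ))
    (hnonab : ∃ g h : G, ρ g * ρ h ≠ ρ h * ρ g) :
    ρ μ ^ 4 = 1 ∧ ρ lam = 1 ∧ ρ (μ ^ 4 * lam) = 1 := by
  -- every image is C-shaped or Jt-shaped
  have hCJ : ∀ g : G, C ((ρ g).val) ∨ Jt ((ρ g).val) := by
    intro g
    rcases hD g with ⟨h1, h2, _⟩ | ⟨h1, h2, _⟩
    · exact Or.inl ⟨h1, h2⟩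
    · exact Or.inr ⟨h1, h2⟩
  have hne : ∀ g : G, ((ρ g).val : Quaternion ℝ) ≠ 0 := fun g => Units.ne_zero _
  -- inverse preserves shape
  have invC : ∀ g : G, C ((ρ g).val) → C ((ρ g⁻¹).val) := by
    intro g hg
    rcases hCJ g⁻¹ with h | h
    · exact h
    · exfalso
      have h1 : (ρ g).val * (ρ g⁻¹).val = 1 := by
        rw [← Units.val_mul, ← map_mul, mul_inv_cancel, map_one, Units.val_one]
      have h2 : Jt ((ρ g).val * (ρ g⁻¹).val) := mulCJ hg h
      rw [h1] at h2
      simpa using h2.1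
  have invJ : ∀ g : G, Jt ((ρ g).val) → Jt ((ρ g⁻¹).val) := by
    intro g hg
    rcases hCJ g⁻¹ with h | h
    · exfalso
      have h1 : (ρ g).val * (ρ g⁻¹).val = 1 := by
        rw [← Units.val_mul, ← map_mul, mul_inv_cancel, map_one, Units.val_one]
      have h2 : Jt ((ρ g).val * (ρ g⁻¹).val) := mulJC hg h
      rw [h1] at h2
      simpa using h2.1
    · exact h
  -- the subgroup of C-shaped elements
  let N : Subgroup G :=
    { carrier := {g : G | C ((ρ g).val)}
      one_mem' := by simp [C]
      mul_mem' := by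
        intro a b ha hb
        have : C ((ρ a).val * (ρ b).val) := mulCC ha hb
        simpa [map_mul] using this
      inv_mem' := by
        intro a ha
        exact invC a ha }
  have hNmem : ∀ g : G, g ∈ N ↔ C ((ρ g).val) := fun g => Iff.rfl
  have hNnormal : N.Normal := by
    constructor
    intro n hn g
    rcases hCJ (g * n * g⁻¹) with h | h
    · exact h
    · exfalso
      -- ρ g * ρ n = ρ(g n g⁻¹) * ρ g
      have key : (ρ g).val * (ρ n).val = (ρ (g * n * g⁻¹)).val * (ρ g).val := by
        have : ρ g * ρ n = ρ (g * n * g⁻¹) * ρ g := by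
          rw [← map_mul, ← map_mul]
          congr 1
          group
        exact congrArg Units.val this
      rcases hCJ g with hg | hg
      · have l : C ((ρ g).val * (ρ n).val) := mulCC hg hn
        have r : Jt ((ρ (g * n * g⁻¹)).val * (ρ g).val) := mulJC h hg
        rw [key] at l
        exact not_C_and_Jt (mul_ne_zero (hne _) (hne _)) ⟨l, r⟩
      · have l : Jt ((ρ g).val * (ρ n).val) := mulJC hg hn
        have r : C ((ρ (g * n * g⁻¹)).val * (ρ g).val) := mulJJ h hg
        rw [key] at l
        exact not_C_and_Jt (mul_ne_zero (hne _) (hne _)) ⟨r, l⟩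
  -- μ is not C-shaped
  have hμJ : Jt ((ρ μ).val) ∧ ((ρ μ).val.imJ ^ 2 + (ρ μ).val.imK ^ 2 = 1) := by
    rcases hD μ with ⟨h1, h2, _⟩ | ⟨h1, h2, h3⟩
    · exfalso
      have hμN : μ ∈ N := ⟨h1, h2⟩
      have : Subgroup.normalClosure ({μ} : Set G) ≤ N :=
        Subgroup.normalClosure_le_normal (by simpa using hμN)
      rw [hμ, top_le_iff] at this
      obtain ⟨g, h, hgh⟩ := hnonab
      exact hgh (commCC ((this ▸ Subgroup.mem_top g : g ∈ N))
        ((this ▸ Subgroup.mem_top h : h ∈ N)))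
    · exact ⟨⟨h1, h2⟩, h3⟩
  obtain ⟨⟨hre, hiI⟩, hnorm⟩ := hμJ
  -- ρ μ ^ 2 = -1
  have hsq : (ρ μ) ^ 2 = -1 := by
    have hval : (ρ μ).val ^ 2 = -1 := by
      ext <;> simp [pow_two, hre, hiI] <;> nlinarith [hnorm]
    exact Units.ext (by simpa [Units.val_pow_eq_pow_val] using hval)
  have hμ4 : ρ μ ^ 4 = 1 := by
    rw [show (4 : ℕ) = 2 * 2 from rfl, pow_mul, hsq]
    simp
  -- derived subgroup maps into N
  have hD1 : derivedSeries G 1 ≤ N := by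
    have : derivedSeries G 1 = ⁅(⊤ : Subgroup G), (⊤ : Subgroup G)⁆ := by
      simp [derivedSeries]
    rw [this, Subgroup.commutator_le]
    intro g _ h _
    have comm_eq : (ρ ⁅g, h⁆).val =
        (ρ g).val * (ρ h).val * (ρ g⁻¹).val * (ρ h⁻¹).val := by
      rw [commutatorElement_def]
      simp [map_mul]
    rw [hNmem, comm_eq]
    rcases hCJ g with hg | hg <;> rcases hCJ h with hh | hh
    · exact mulCC (mulCC (mulCC hg hh) (invC g hg)) (invC h hh)
    · exact mulJJ (mulJC (mulCJ hg hh) (invC g hg)) (invJ h hh)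
    · exact mulCC (mulJJ (mulJC hg hh) (invJ g hg)) (invC h hh)
    · exact mulJJ (mulCJ (mulJJ hg hh) (invJ g hg)) (invJ h hh)
  -- second derived subgroup is in the kernel
  have hD2 : derivedSeries G 2 ≤ ρ.ker := by
    have : derivedSeries G 2 = ⁅derivedSeries G 1, derivedSeries G 1⁆ := rfl
    rw [this, Subgroup.commutator_le]
    intro g hg h hh
    rw [MonoidHom.mem_ker, map_commutatorElement,
      commutatorElement_eq_one_iff_mul_comm]
    exact commCC (hD1 hg) (hD1 hh)
  have hlam1 : ρ lam = 1 := hD2 hlam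
  refine ⟨hμ4, hlam1, ?_⟩
  rw [map_mul, map_pow, hμ4, hlam1, one_mul]
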